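/- Let Γ be a set of temporal valued relations on ℚ such that the crisp relation < belongs to ⟨Γ⟩. Let α, β, γ ∈ ℚ ∪ {∞} be such that either α < min(β,γ) < ∞, or β ≠ γ and both β and γ are finite. If R_{α,β,γ} belongs to ⟨Γ⟩, then the crisp relation Cyc belongs to ⟨Γ⟩. -/

import Mathlib

open Classical

/-- A valued relation of arity `k` on `ℚ`. -/
abbrev VRel (k : ℕ) : Type := (Fin k → ℚ) → WithTop ℚ

/-- The crisp valued relation associated to a set of tuples: `0` on the set, `∞` off it. -/
noncomputable def crisp {k : ℕ} (S : Set (Fin k → ℚ)) : VRel k :=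
  fun t => if t ∈ S then 0 else ⊤

/-- A unary operation improves a valued relation. -/
def Improves1 (f : ℚ → ℚ) {k : ℕ} (R : VRel k) : Prop :=
  ∀ t : Fin k → ℚ, R (fun i => f (t i)) ≤ R t

/-- A binary operation improves a valued relation: `2·R(g(s,t)) ≤ R(s) + R(t)`. -/
def Improves2 (g : ℚ → ℚ → ℚ) {k : ℕ} (R : VRel k) : Prop :=
  ∀ s t : Fin k → ℚ, 2 • R (fun i => g (s i) (t i)) ≤ R s + R t

/-- A valued relation is temporal if it is invariant under all order-preserving
bijections of `ℚ`. -/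
def Temporal {k : ℕ} (R : VRel k) : Prop :=
  ∀ α : ℚ → ℚ, Function.Bijective α → StrictMono α →
    ∀ t : Fin k → ℚ, R (fun i => α (t i)) = R t

/-- A valued relation is `Sym(ℚ)`-invariant if it is invariant under all bijections of `ℚ`. -/
def SymInvariant {k : ℕ} (R : VRel k) : Prop :=
  ∀ α : ℚ → ℚ, Function.Bijective α →
    ∀ t : Fin k → ℚ, R (fun i => α (t i)) = R t

/-- The valued relational clone generated by a set `Γ` of valued relations on `ℚ`:
the smallest set of valued relations containing `Γ`, crisp equality and the crisp empty
unary relation, closed under sums of atomic expressions, projection (infimum over extra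
coordinates), shifting, nonnegative scaling, `Feas` and `Opt`. -/
inductive Clone (Γ : Set ((k : ℕ) × VRel k)) : {k : ℕ} → VRel k → Prop where
  | base {k : ℕ} {R : VRel k} : Sigma.mk k R ∈ Γ → Clone Γ R
  | eqRel : Clone Γ (crisp {t : Fin 2 → ℚ | t 0 = t 1})
  | emptyRel : Clone Γ (crisp (∅ : Set (Fin 1 → ℚ)))
  | sum {m n : ℕ} {k : Fin m → ℕ} {R : ∀ i : Fin m, VRel (k i)}
      (σ : ∀ i : Fin m, Fin (k i) → Fin n) :
      (∀ i : Fin m, Clone Γ (R i)) →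
      Clone Γ (fun x : Fin n → ℚ => ∑ i : Fin m, R i (fun j => x (σ i j)))
  | proj {k n : ℕ} {R : VRel (k + n)} {R' : VRel k} :
      Clone Γ R →
      (∀ s : Fin k → ℚ,
        IsGLB {v : WithTop ℚ | ∃ t : Fin n → ℚ, v = R (Fin.append s t)} (R' s)) →
      Clone Γ R'
  | shift {k : ℕ} {R : VRel k} (c : ℚ) :
      Clone Γ R → Clone Γ (fun t => R t + (c : WithTop ℚ))
  | scale {k : ℕ} {R : VRel k} (q : ℚ) (hq : 0 ≤ q) :
      Clone Γ R → Clone Γ (fun t => (q : WithTop ℚ) * R t)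
  | feas {k : ℕ} {R : VRel k} :
      Clone Γ R → Clone Γ (fun t => if R t ≠ ⊤ then 0 else ⊤)
  | opt {k : ℕ} {R : VRel k} :
      Clone Γ R → Clone Γ (fun t => if R t ≠ ⊤ ∧ ∀ s, R t ≤ R s then 0 else ⊤)

/-- The crisp binary order relation `<` on `ℚ`. -/
def LtS : Set (Fin 2 → ℚ) := {t | t 0 < t 1}

/-- The crisp binary disequality relation on `ℚ`. -/
def NeS : Set (Fin 2 → ℚ) := {t | t 0 ≠ t 1}

def BetwS : Set (Fin 3 → ℚ) :=
  {t | (t 0 < t 1 ∧ t 1 < t 2) ∨ (t 2 < t 1 ∧ t 1 < t 0)}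

def CycS : Set (Fin 3 → ℚ) :=
  {t | (t 0 < t 1 ∧ t 1 < t 2) ∨ (t 1 < t 2 ∧ t 2 < t 0) ∨ (t 2 < t 0 ∧ t 0 < t 1)}

/-- `c` lies strictly between `a` and `b`. -/
def StrictBetween (a b c : ℚ) : Prop := (a < c ∧ c < b) ∨ (b < c ∧ c < a)

def SepS : Set (Fin 4 → ℚ) :=
  {t | Function.Injective t ∧
    Xor' (StrictBetween (t 0) (t 1) (t 2)) (StrictBetween (t 0) (t 1) (t 3))}

def T3S : Set (Fin 3 → ℚ) :=
  {t | (t 0 = t 1 ∧ t 1 < t 2) ∨ (t 0 = t 2 ∧ t 2 < t 1)}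

def NegT3S : Set (Fin 3 → ℚ) := {t | (fun i => -(t i)) ∈ T3S}

def DisS : Set (Fin 3 → ℚ) :=
  {t | (t 0 = t 1 ∧ t 1 ≠ t 2) ∨ (t 0 ≠ t 1 ∧ t 1 = t 2)}

/-- The binary valued relation `R_{α,β,γ}` on `ℚ`. -/
noncomputable def Rabc (a b c : WithTop ℚ) : VRel 2 :=
  fun t => if t 0 = t 1 then a else if t 0 < t 1 then b else c

/-- A lex-operation on `ℚ`. -/
def IsLex (l : ℚ → ℚ → ℚ) : Prop :=
  ∀ x x' y y' : ℚ, l x y < l x' y' ↔ (x < x' ∨ (x = x' ∧ y < y'))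

/-- The dual of a binary operation on `ℚ`. -/
def dualOp (g : ℚ → ℚ → ℚ) : ℚ → ℚ → ℚ := fun x y => -g (-x) (-y)

/-- Operations of `mx` type. -/
def IsMx (g : ℚ → ℚ → ℚ) : Prop :=
  ∃ ene eeq : ℚ → ℚ, StrictMono ene ∧ StrictMono eeq ∧
    (∀ x ε : ℚ, 0 < ε → ene x < eeq x ∧ eeq x < ene (x + ε)) ∧
    ∀ x y : ℚ, g x y = if x = y then eeq x else ene (min x y)

/-- Operations of `mi` type. -/
def IsMi (g : ℚ → ℚ → ℚ) : Prop :=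
  ∃ elt eeq egt : ℚ → ℚ, StrictMono elt ∧ StrictMono eeq ∧ StrictMono egt ∧
    (∀ x ε : ℚ, 0 < ε → eeq x < egt x ∧ egt x < elt x ∧ elt x < eeq (x + ε)) ∧
    ∀ x y : ℚ, g x y = if x < y then elt x else if x = y then eeq x else egt y

/-- Operations of `lele` type. -/
def IsLele (g : ℚ → ℚ → ℚ) : Prop :=
  ∃ eneg epos : ℚ → ℚ, StrictMono eneg ∧ StrictMono epos ∧
    (∀ x, eneg x < 0) ∧ (∀ x, 0 < epos x) ∧
    ∃ l, IsLex l ∧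
      ∀ x y : ℚ, g x y = if x ≤ 0 then l (eneg x) (eneg y) else l (epos y) (epos x)

/-- A binary operation preserves a crisp relation (given as a set of tuples). -/
def Pres2 (g : ℚ → ℚ → ℚ) {k : ℕ} (S : Set (Fin k → ℚ)) : Prop :=
  ∀ s t : Fin k → ℚ, s ∈ S → t ∈ S → (fun i => g (s i) (t i)) ∈ S

/-- The feasibility relation of a valued relation. -/
def FeasSet {k : ℕ} (R : VRel k) : Set (Fin k → ℚ) := {t | R t ≠ ⊤}

/-- The set of minimal-value feasible tuples of a valued relation. -/
def OptSet {k : ℕ} (R : VRel k) : Set (Fin k → ℚ) := {t | R t ≠ ⊤ ∧ ∀ s, R t ≤ R s}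

/-- `g` preserves every relation of the crisp structure `Γ̂`, consisting of `Feas(R)`
for `R ∈ Γ` and `Opt(R_σ)` for all minors `R_σ` of relations `R ∈ Γ`. -/
def PresHat (g : ℚ → ℚ → ℚ) (Γ : Set ((k : ℕ) × VRel k)) : Prop :=
  ∀ p ∈ Γ, Pres2 g (FeasSet p.2) ∧
    ∀ (n : ℕ) (σ : Fin p.1 → Fin n),
      Pres2 g (OptSet (fun x : Fin n → ℚ => p.2 (fun j => x (σ j))))

/-- `g` is min, max, of mx/mi/lele type, or the dual of an mx/mi/lele type operation. -/
def GoodOp (g : ℚ → ℚ → ℚ) : Prop :=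
  g = (fun x y => min x y) ∨ g = (fun x y => max x y) ∨ IsMx g ∨ IsMi g ∨ IsLele g ∨
    ∃ h, (IsMx h ∨ IsMi h ∨ IsLele h) ∧ g = dualOp h

/-- `g` is the constant-zero binary operation, min, max, or of mx/mi/lele type. -/
def BaseOp (g : ℚ → ℚ → ℚ) : Prop :=
  g = (fun _ _ => (0 : ℚ)) ∨ g = (fun x y => min x y) ∨ g = (fun x y => max x y) ∨
    IsMx g ∨ IsMi g ∨ IsLele g

/-- If `⟨Γ⟩` contains crisp `<` and `R_{α,β,γ}` where `α < min(β,γ) < ∞`, or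
`β ≠ γ` with `β, γ` finite, then `⟨Γ⟩` contains the crisp relation `Cyc`. -/
lemma clone_transpose {Γ : Set ((k : ℕ) × VRel k)} {a b c : WithTop ℚ}
    (hR : Clone Γ (Rabc a b c)) : Clone Γ (Rabc a c b) := by
  have h1 := Clone.sum (Γ := Γ) (n := 2) (k := fun _ : Fin 1 => 2)
      (R := fun _ => Rabc a b c) (fun _ => ![1, 0]) (fun _ => hR)
  have he : (fun x : Fin 2 → ℚ => ∑ _i : Fin 1, Rabc a b c (fun j => x (![1, 0] j)))
      = Rabc a c b := by
    funext x
    rw [Fin.sum_univ_one]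
    have h2 : (fun j => x (![1, 0] j)) = ![x 1, x 0] := by
      funext j; fin_cases j <;> rfl
    rw [h2]
    show Rabc a b c ![x 1, x 0] = Rabc a c b x
    simp only [Rabc, Matrix.cons_val_zero, Matrix.cons_val_one, Matrix.head_cons]
    rcases lt_trichotomy (x 0) (x 1) with h | h | h
    · simp [h, h.ne, h.ne', not_lt_of_gt h]
    · simp [h]
    · simp [h, h.ne, h.ne', not_lt_of_gt h]
  rwa [he] at h1

lemma cyc_of_rabc {Γ : Set ((k : ℕ) × VRel k)} {a b c : WithTop ℚ}
    (hlt : Clone Γ (crisp LtS)) (hR : Clone Γ (Rabc a b c))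
    (hm : min a (min b c) < b) (hb : b < ⊤) : Clone Γ (crisp CycS) := by
  obtain ⟨b', rfl⟩ := WithTop.ne_top_iff_exists.mp hb.ne
  obtain ⟨m', hm'⟩ := WithTop.ne_top_iff_exists.mp (hm.trans hb).ne
  have hmb : m' < b' := by
    have h := hm; rw [← hm'] at h; exact_mod_cast h
  set M : VRel 2 := fun s => if s 0 < s 1 then (m' : WithTop ℚ) else (b' : WithTop ℚ)
    with hMdef
  have hMval : ∀ u v : ℚ, M ![u, v] = if u < v then (m' : WithTop ℚ) else (b' : WithTop ℚ) := by
    intro u v; rw [hMdef]; simp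
  have hRv : ∀ u v : ℚ, Rabc a (b' : WithTop ℚ) c ![u, v]
      = if u = v then a else if u < v then (b' : WithTop ℚ) else c := by
    intro u v; simp [Rabc]
  have hLv : ∀ u v : ℚ, crisp LtS ![u, v] = if u < v then (0 : WithTop ℚ) else ⊤ := by
    intro u v; simp [crisp, LtS]
  -- the 3-ary relation W(x) = R(x1,x2) + <(x0,x2)
  set W : VRel 3 := fun x : Fin 3 → ℚ =>
      ∑ i : Fin 2, ![Rabc a (b' : WithTop ℚ) c, crisp LtS] i
        (fun j => x (![![1, 2], ![0, 2]] i j)) with hWdef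
  have hWclone : Clone Γ W := by
    rw [hWdef]
    refine Clone.sum (k := fun _ : Fin 2 => 2) _ ?_
    intro i; fin_cases i
    · exact hR
    · exact hlt
  have hWv : ∀ (s : Fin 2 → ℚ) (t : Fin 1 → ℚ),
      W (Fin.append s t)
      = Rabc a (b' : WithTop ℚ) c ![s 1, t 0] + crisp LtS ![s 0, t 0] := by
    intro s t
    have e0 : (fun j => Fin.append s t (![![1, 2], ![0, 2]] (0 : Fin 2) j)) = ![s 1, t 0] := by
      funext j; fin_cases j <;> rfl
    have e1 : (fun j => Fin.append s t (![![1, 2], ![0, 2]] (1 : Fin 2) j)) = ![s 0, t 0] := by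
      funext j; fin_cases j <;> rfl
    simp only [hWdef]
    rw [Fin.sum_univ_two]
    show Rabc a (b' : WithTop ℚ) c (fun j => Fin.append s t (![![1, 2], ![0, 2]] (0 : Fin 2) j))
        + crisp LtS (fun j => Fin.append s t (![![1, 2], ![0, 2]] (1 : Fin 2) j)) = _
    rw [e0, e1]
  -- M is in the clone via projection
  have hMclone : Clone Γ M := by
    refine Clone.proj (n := 1) hWclone ?_
    intro s
    refine IsLeast.isGLB ⟨?_, ?_⟩
    · -- M s is attained
      by_cases hs : s 0 < s 1
      · have hMs : M s = (m' : WithTop ℚ) := by rw [hMdef]; simp [hs]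
        rw [hMs]
        have h3 : (m' : WithTop ℚ) = a ∨ (m' : WithTop ℚ) = (b' : WithTop ℚ)
            ∨ (m' : WithTop ℚ) = c := by
          rcases min_choice a (min (b' : WithTop ℚ) c) with h | h
          · left; rw [hm', h]
          · rcases min_choice (b' : WithTop ℚ) c with h2 | h2
            · right; left; rw [hm', h, h2]
            · right; right; rw [hm', h, h2]
        rcases h3 with h | h | h
        · exact ⟨![s 1], by rw [hWv, hRv, hLv]; simp [hs, h]⟩
        · refine ⟨![s 1 + 1], ?_⟩
          rw [hWv, hRv, hLv]
          have h1 : s 1 ≠ s 1 + 1 := by intro hh; linarith [hh]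
          have h2 : s 1 < s 1 + 1 := by linarith
          have h4 : s 0 < s 1 + 1 := by linarith
          simp [h1, h2, h4, h]
        · refine ⟨![(s 0 + s 1) / 2], ?_⟩
          rw [hWv, hRv, hLv]
          have h1 : (s 0 + s 1) / 2 < s 1 := by linarith
          have h2 : s 0 < (s 0 + s 1) / 2 := by linarith
          simp [ne_of_gt h1, not_lt_of_gt h1, h2, h]
      · have hMs : M s = (b' : WithTop ℚ) := by rw [hMdef]; simp [hs]
        rw [hMs]
        push_neg at hs
        refine ⟨![s 0 + 1], ?_⟩
        rw [hWv, hRv, hLv]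
        have h1 : s 1 ≠ s 0 + 1 := by intro hh; linarith [hh]
        have h2 : s 1 < s 0 + 1 := by linarith
        have h4 : s 0 < s 0 + 1 := by linarith
        simp [h1, h2, h4]
    · -- lower bound
      rintro v ⟨t, rfl⟩
      rw [hWv, hRv, hLv]
      by_cases h0 : s 0 < t 0
      · rw [if_pos h0, add_zero]
        by_cases hs : s 0 < s 1
        · have hMs : M s = (m' : WithTop ℚ) := by rw [hMdef]; simp [hs]
          rw [hMs]
          have hma : (m' : WithTop ℚ) ≤ a := hm' ▸ min_le_left _ _
          have hmbb : (m' : WithTop ℚ) ≤ (b' : WithTop ℚ) :=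
            hm' ▸ le_trans (min_le_right _ _) (min_le_left _ _)
          have hmc : (m' : WithTop ℚ) ≤ c :=
            hm' ▸ le_trans (min_le_right _ _) (min_le_right _ _)
          split_ifs <;> assumption
        · have hMs : M s = (b' : WithTop ℚ) := by rw [hMdef]; simp [hs]
          rw [hMs]
          push_neg at hs
          have h1 : s 1 < t 0 := lt_of_le_of_lt hs h0
          rw [if_neg h1.ne, if_pos h1]
      · rw [if_neg h0, add_top]
        exact le_top
  -- the cyclic sum S3
  set S3 : VRel 3 := fun x : Fin 3 → ℚ =>
      ∑ i : Fin 3, (fun _ : Fin 3 => M) i (fun j => x (![![0, 1], ![1, 2], ![2, 0]] i j))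
    with hS3def
  have hS3clone : Clone Γ S3 := by
    rw [hS3def]
    exact Clone.sum (k := fun _ : Fin 3 => 2) _ (fun _ => hMclone)
  have hS3v : ∀ x : Fin 3 → ℚ, S3 x = M ![x 0, x 1] + M ![x 1, x 2] + M ![x 2, x 0] := by
    intro x
    have e0 : (fun j => x (![![0, 1], ![1, 2], ![2, 0]] (0 : Fin 3) j)) = ![x 0, x 1] := by
      funext j; fin_cases j <;> rfl
    have e1 : (fun j => x (![![0, 1], ![1, 2], ![2, 0]] (1 : Fin 3) j)) = ![x 1, x 2] := by
      funext j; fin_cases j <;> rfl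
    have e2 : (fun j => x (![![0, 1], ![1, 2], ![2, 0]] (2 : Fin 3) j)) = ![x 2, x 0] := by
      funext j; fin_cases j <;> rfl
    simp only [hS3def]
    rw [Fin.sum_univ_three]
    show M (fun j => x (![![0, 1], ![1, 2], ![2, 0]] (0 : Fin 3) j))
        + M (fun j => x (![![0, 1], ![1, 2], ![2, 0]] (1 : Fin 3) j))
        + M (fun j => x (![![0, 1], ![1, 2], ![2, 0]] (2 : Fin 3) j)) = _
    rw [e0, e1, e2]
  have fact1 : ∀ x : Fin 3 → ℚ, x ∈ CycS → S3 x = ((m' + m' + b' : ℚ) : WithTop ℚ) := by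
    intro x hx
    rw [hS3v, hMval, hMval, hMval]
    rcases hx with ⟨h1, h2⟩ | ⟨h1, h2⟩ | ⟨h1, h2⟩
    · rw [if_pos h1, if_pos h2, if_neg (not_lt_of_gt (h1.trans h2))]
      push_cast; abel
    · rw [if_neg (not_lt_of_gt (h1.trans h2)), if_pos h1, if_pos h2]
      push_cast; abel
    · rw [if_pos h2, if_neg (not_lt_of_gt (h1.trans h2)), if_pos h1]
      push_cast; abel
  have fact2 : ∀ x : Fin 3 → ℚ, x ∉ CycS →
      ∃ q : ℚ, S3 x = (q : WithTop ℚ) ∧ m' + m' + b' < q := by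
    intro x hx
    rw [hS3v, hMval, hMval, hMval]
    by_cases h01 : x 0 < x 1 <;> by_cases h12 : x 1 < x 2 <;> by_cases h20 : x 2 < x 0
    · exact absurd (h01.trans h12) (not_lt_of_gt h20)
    · exact absurd (Or.inl ⟨h01, h12⟩) hx
    · exact absurd (Or.inr (Or.inr ⟨h20, h01⟩)) hx
    · refine ⟨m' + b' + b', ?_, by linarith⟩
      rw [if_pos h01, if_neg h12, if_neg h20]; push_cast; abel
    · exact absurd (Or.inr (Or.inl ⟨h12, h20⟩)) hx
    · refine ⟨b' + m' + b', ?_, by linarith⟩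
      rw [if_neg h01, if_pos h12, if_neg h20]; push_cast; abel
    · refine ⟨b' + b' + m', ?_, by linarith⟩
      rw [if_neg h01, if_neg h12, if_pos h20]; push_cast; abel
    · refine ⟨b' + b' + b', ?_, by linarith⟩
      rw [if_neg h01, if_neg h12, if_neg h20]; push_cast; abel
  have hx0 : (![0, 1, 2] : Fin 3 → ℚ) ∈ CycS := by
    left; exact ⟨by norm_num, (by norm_num : (1 : ℚ) < 2)⟩
  have hopt := Clone.opt hS3clone
  have key : (fun t : Fin 3 → ℚ => if S3 t ≠ ⊤ ∧ ∀ s, S3 t ≤ S3 s then (0 : WithTop ℚ) else ⊤)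
      = crisp CycS := by
    funext t
    by_cases ht : t ∈ CycS
    · rw [crisp, if_pos ht, if_pos]
      refine ⟨by rw [fact1 t ht]; exact WithTop.coe_ne_top, ?_⟩
      intro s
      rw [fact1 t ht]
      by_cases hs : s ∈ CycS
      · rw [fact1 s hs]
      · obtain ⟨q, hq, hlt2⟩ := fact2 s hs
        rw [hq]
        exact_mod_cast le_of_lt hlt2
    · rw [crisp, if_neg ht, if_neg]
      rintro ⟨-, hall⟩
      obtain ⟨q, hq, hlt2⟩ := fact2 t ht
      have h5 := hall ![0, 1, 2]
      rw [hq, fact1 _ hx0] at h5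
      have h6 : q ≤ m' + m' + b' := by exact_mod_cast h5
      linarith
  rwa [key] at hopt

theorem stmt8 (Γ : Set ((k : ℕ) × VRel k)) (hT : ∀ p ∈ Γ, Temporal p.2)
    (hlt : Clone Γ (crisp LtS)) (a b c : WithTop ℚ)
    (habc : (a < min b c ∧ min b c < ⊤) ∨ (b ≠ c ∧ b < ⊤ ∧ c < ⊤))
    (hR : Clone Γ (Rabc a b c)) :
    Clone Γ (crisp CycS) := by
  rcases habc with ⟨h1, h2⟩ | ⟨hne, hb, hc⟩
  · rcases min_lt_iff.mp h2 with hb | hc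
    · exact cyc_of_rabc hlt hR
        ((min_le_left a _).trans_lt (h1.trans_le (min_le_left b c))) hb
    · exact cyc_of_rabc hlt (clone_transpose hR)
        ((min_le_left a _).trans_lt (h1.trans_le (min_le_right b c))) hc
  · rcases lt_or_gt_of_ne hne with hbc | hcb
    · exact cyc_of_rabc hlt (clone_transpose hR)
        (((min_le_right a _).trans (min_le_right c b)).trans_lt hbc) hc
    · exact cyc_of_rabc hlt hR
        (((min_le_right a _).trans (min_le_right b c)).trans_lt hcb) hb
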